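/- Let S be a set of 10 piece selections in Fin 3 → Fin 4 with positive weights such that each of the 12 axis planes has total weight exactly 1/4. If some axis plane contains exactly one selection of S, then the conflict graph on S (edges between disjoint selections) has a connected component of size at least 6. -/

import Mathlib

/-- The conflict graph on a set `S` of piece selections: two selections are adjacent
iff both lie in `S` and they are disjoint (differ in every coordinate). -/
def conflictGraph (S : Finset (Fin 3 → Fin 4)) : SimpleGraph (Fin 3 → Fin 4) where
  Adj s t := s ∈ S ∧ t ∈ S ∧ ∀ i, s i ≠ t i
  symm := by
    constructor
    intro s t ⟨hs, ht, h⟩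
    exact ⟨ht, hs, fun i => (h i).symm⟩
  loopless := by
    constructor
    intro s ⟨_, _, h⟩
    exact h 0 rfl

/-- If some axis plane contains exactly one selection of `S`, then the conflict
graph on `S` has a connected component of size at least 6. -/
theorem component_of_single_vertex_plane (S : Finset (Fin 3 → Fin 4)) (hS : S.card = 10)
    (a : (Fin 3 → Fin 4) → ℝ) (hpos : ∀ s ∈ S, 0 < a s)
    (hplane : ∀ (i : Fin 3) (j : Fin 4),
      ∑ s ∈ S.filter (fun s => s i = j), a s = 1 / 4)
    (hsingle : ∃ (i : Fin 3) (j : Fin 4), (S.filter (fun s => s i = j)).card = 1) :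
    ∃ v ∈ S, 6 ≤ Set.ncard {t | t ∈ S ∧ (conflictGraph S).Reachable v t} := by
  obtain ⟨i, j, hcard⟩ := hsingle
  obtain ⟨v, hv⟩ := Finset.card_eq_one.mp hcard
  have hvS : v ∈ S := by
    have : v ∈ S.filter (fun s => s i = j) := hv ▸ Finset.mem_singleton_self v
    exact (Finset.mem_filter.mp this).1
  have hav : a v = 1 / 4 := by
    have h := hplane i j
    rwa [hv, Finset.sum_singleton] at h
  have hkey : ∀ k : Fin 3, ∀ t ∈ S, t k = v k → t = v := by
    intro k t htS htk
    by_contra hne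
    have hsub : ({v, t} : Finset (Fin 3 → Fin 4)) ⊆ S.filter (fun s => s k = v k) := by
      intro x hx
      rcases Finset.mem_insert.mp hx with rfl | hx
      · exact Finset.mem_filter.mpr ⟨hvS, rfl⟩
      · rw [Finset.mem_singleton] at hx; subst hx
        exact Finset.mem_filter.mpr ⟨htS, htk⟩
    have hle : ∑ x ∈ ({v, t} : Finset (Fin 3 → Fin 4)), a x
        ≤ ∑ s ∈ S.filter (fun s => s k = v k), a s :=
      Finset.sum_le_sum_of_subset_of_nonneg hsub
        (fun x hx _ => le_of_lt (hpos x (Finset.mem_filter.mp hx).1))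
    rw [Finset.sum_pair (Ne.symm hne), hplane k (v k), hav] at hle
    have := hpos t htS
    linarith
  have hset : {t | t ∈ S ∧ (conflictGraph S).Reachable v t} = (S : Set (Fin 3 → Fin 4)) := by
    ext t
    simp only [Set.mem_setOf_eq, Finset.coe_sort_coe, Finset.mem_coe]
    constructor
    · exact fun h => h.1
    · intro htS
      refine ⟨htS, ?_⟩
      by_cases hne : t = v
      · subst hne; exact SimpleGraph.Reachable.refl _
      · have hadj : (conflictGraph S).Adj v t := by
          refine ⟨hvS, htS, fun k => ?_⟩
          intro hk
          exact hne (hkey k t htS hk.symm)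
        exact hadj.reachable
  refine ⟨v, hvS, ?_⟩
  rw [hset, Set.ncard_coe_finset, hS]
  norm_num
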